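/- Let V₀>3, T=2π, a=0, b=2, c=1/10, and define e:[0,2π]→ℝ by e(t) = (1/10)V₀ + 9/5 + (21/10 − V₀)cos t − 3cos²t. Then the function u(t) = (V₀−2) + cos t satisfies u(t)>0 for all t∈[0,2π], u''(t) + a u'(t) = (1/u(t))·(e(t) − b·(u'(t))²) − c for all t∈[0,2π], u(0)=u(2π), and u'(0)=u'(2π). Moreover, the mean value (1/(2π))∫₀^{2π} e(s) ds is positive while min{e(t): t∈[0,2π]} < 0. -/

import Mathlib

open Set Real

noncomputable def pd1 (T : ℝ) (x : ℝ → ℝ) : ℝ → ℝ := derivWithin x (Set.Icc 0 T)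

noncomputable def pd2 (T : ℝ) (x : ℝ → ℝ) : ℝ → ℝ := derivWithin (pd1 T x) (Set.Icc 0 T)

/-- The external force `e(t) = 0.1 V₀ + 1.8 + (2.1 − V₀) cos t − 3 cos² t`. -/
noncomputable def e17 (V₀ t : ℝ) : ℝ :=
  V₀ / 10 + 9 / 5 + (21 / 10 - V₀) * Real.cos t - 3 * (Real.cos t) ^ 2

/-- The candidate solution `u(t) = (V₀ − 2) + cos t`. -/
noncomputable def u17 (V₀ t : ℝ) : ℝ := (V₀ - 2) + Real.cos t

theorem statement17 (V₀ : ℝ) (hV₀ : 3 < V₀) :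
    (∀ t ∈ Set.Icc 0 (2 * Real.pi), 0 < u17 V₀ t) ∧
    (∀ t ∈ Set.Icc 0 (2 * Real.pi),
      pd2 (2 * Real.pi) (u17 V₀) t + 0 * pd1 (2 * Real.pi) (u17 V₀) t =
        (1 / u17 V₀ t) * (e17 V₀ t - 2 * (pd1 (2 * Real.pi) (u17 V₀) t) ^ 2) - 1 / 10) ∧
    u17 V₀ 0 = u17 V₀ (2 * Real.pi) ∧
    pd1 (2 * Real.pi) (u17 V₀) 0 = pd1 (2 * Real.pi) (u17 V₀) (2 * Real.pi) ∧
    0 < (1 / (2 * Real.pi)) * ∫ u in (0:ℝ)..(2 * Real.pi), e17 V₀ u ∧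
    sInf (e17 V₀ '' Set.Icc 0 (2 * Real.pi)) < 0 := by
  have hπ : (0:ℝ) < 2 * Real.pi := by positivity
  have hud : UniqueDiffOn ℝ (Set.Icc (0:ℝ) (2 * Real.pi)) := uniqueDiffOn_Icc hπ
  have hder : ∀ t : ℝ, HasDerivAt (u17 V₀) (-Real.sin t) t := by
    intro t
    exact (Real.hasDerivAt_cos t).const_add (V₀ - 2)
  have hpd1 : ∀ t ∈ Set.Icc (0:ℝ) (2 * Real.pi),
      pd1 (2 * Real.pi) (u17 V₀) t = -Real.sin t := by
    intro t ht
    exact ((hder t).hasDerivWithinAt).derivWithin (hud t ht)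
  have hpd2 : ∀ t ∈ Set.Icc (0:ℝ) (2 * Real.pi),
      pd2 (2 * Real.pi) (u17 V₀) t = -Real.cos t := by
    intro t ht
    unfold pd2
    rw [derivWithin_congr hpd1 (hpd1 t ht)]
    have h : HasDerivAt (fun s => -Real.sin s) (-Real.cos t) t := (Real.hasDerivAt_sin t).neg
    exact h.hasDerivWithinAt.derivWithin (hud t ht)
  have hupos : ∀ t ∈ Set.Icc (0:ℝ) (2 * Real.pi), 0 < u17 V₀ t := by
    intro t _
    have := Real.neg_one_le_cos t
    unfold u17; linarith
  refine ⟨hupos, ?_, ?_, ?_, ?_, ?_⟩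
  · intro t ht
    rw [hpd1 t ht, hpd2 t ht]
    have hu := hupos t ht
    have hu' : u17 V₀ t ≠ 0 := ne_of_gt hu
    have hs : Real.sin t ^ 2 = 1 - Real.cos t ^ 2 := Real.sin_sq t
    simp only [neg_sq]
    rw [hs]
    field_simp [e17, u17] at *
    unfold e17 u17; ring
  · simp [u17, Real.cos_two_pi]
  · rw [hpd1 0 ⟨le_refl _, le_of_lt hπ⟩, hpd1 (2 * Real.pi) ⟨le_of_lt hπ, le_refl _⟩]
    simp [Real.sin_two_pi]
  · have h1 : ∫ u in (0:ℝ)..(2 * Real.pi), Real.cos u = 0 := by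
      simp [integral_cos, Real.sin_two_pi]
    have h2 : ∫ u in (0:ℝ)..(2 * Real.pi), Real.cos u ^ 2 = Real.pi := by
      rw [integral_cos_sq]
      simp [Real.sin_two_pi]
    have hi1 : IntervalIntegrable (fun u => V₀ / 10 + 9 / 5 + (21 / 10 - V₀) * Real.cos u)
        MeasureTheory.volume 0 (2 * Real.pi) :=
      (Continuous.intervalIntegrable (by continuity) _ _)
    have hi2 : IntervalIntegrable (fun u => 3 * Real.cos u ^ 2)
        MeasureTheory.volume 0 (2 * Real.pi) :=
      (Continuous.intervalIntegrable (by continuity) _ _)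
    have hi3 : IntervalIntegrable (fun u : ℝ => V₀ / 10 + 9 / 5)
        MeasureTheory.volume 0 (2 * Real.pi) :=
      (Continuous.intervalIntegrable (by continuity) _ _)
    have hi4 : IntervalIntegrable (fun u => (21 / 10 - V₀) * Real.cos u)
        MeasureTheory.volume 0 (2 * Real.pi) :=
      (Continuous.intervalIntegrable (by continuity) _ _)
    have hint : ∫ u in (0:ℝ)..(2 * Real.pi), e17 V₀ u = 2 * Real.pi * (V₀ / 10 + 3 / 10) := by
      unfold e17
      rw [intervalIntegral.integral_sub hi1 hi2, intervalIntegral.integral_add hi3 hi4,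
        intervalIntegral.integral_const_mul, intervalIntegral.integral_const_mul,
        intervalIntegral.integral_const, h1, h2]
      simp [smul_eq_mul]
      ring
    rw [hint]
    have : 0 < V₀ / 10 + 3 / 10 := by linarith
    calc (0:ℝ) < (1 / (2 * Real.pi)) * (2 * Real.pi * (V₀ / 10 + 3 / 10)) := by positivity
    _ = _ := rfl
  · have hcont : ContinuousOn (e17 V₀) (Set.Icc 0 (2 * Real.pi)) := by
      apply Continuous.continuousOn
      unfold e17
      exact ((continuous_const.add (continuous_const.mul Real.continuous_cos)).sub
        (continuous_const.mul (Real.continuous_cos.pow 2)))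
    have hbdd : BddBelow (e17 V₀ '' Set.Icc 0 (2 * Real.pi)) :=
      (isCompact_Icc.image_of_continuousOn hcont).bddBelow
    have hmem : e17 V₀ 0 ∈ e17 V₀ '' Set.Icc 0 (2 * Real.pi) :=
      ⟨0, ⟨le_refl _, le_of_lt hπ⟩, rfl⟩
    have hle := csInf_le hbdd hmem
    have : e17 V₀ 0 < 0 := by
      unfold e17; simp [Real.cos_zero]; linarith
    linarith
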